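/- For every countable indexed collection C = {L_1, L_2, ...} of infinite languages over a countably infinite universe U, there exists a generating algorithm that non-uniformly generates in the limit from C. -/
import Mathlib


/-!
STATEMENT 0: For every countable indexed collection C = {L_0, L_1, ...} of infinite
languages over a countably infinite universe U, there exists a generating algorithm
that non-uniformly generates in the limit from C.

A generating algorithm is a function mapping each finite input prefix (as a list) to
a string of U.  `seen x t` is the set of distinct strings among the first `t` inputs.
-/

/-- `x` is an enumeration of the language `K`: every input belongs to `K` and every
element of `K` appears at some finite time. -/
def IsEnumerationOf {U : Type} (K : Set U) (x : ℕ → U) : Prop :=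
  (∀ t, x t ∈ K) ∧ ∀ w ∈ K, ∃ t, x t = w

/-- The set `S_t` of distinct strings among the first `t` inputs `x 0, ..., x (t-1)`. -/
def seen {U : Type} (x : ℕ → U) (t : ℕ) : Set U := x '' {i | i < t}

/-- The input prefix `(x_1, ..., x_t)` as a list, fed to the algorithm. -/
def inputList {U : Type} (x : ℕ → U) (t : ℕ) : List U :=
  List.ofFn (fun i : Fin t => x i)

/-- Intersection of all languages of index `< m` consistent with the list `l`. -/
def Iset {U : Type} (L : ℕ → Set U) (l : List U) (m : ℕ) : Set U :=
  {z | ∀ j < m, (∀ a ∈ l, a ∈ L j) → z ∈ L j}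

/-- There is an unseen element in the `m`-th candidate intersection. -/
def Pgood {U : Type} (L : ℕ → Set U) (l : List U) (m : ℕ) : Prop :=
  ∃ z, z ∉ l ∧ z ∈ Iset L l m

lemma Pgood_zero {U : Type} [Infinite U] (L : ℕ → Set U) (l : List U) :
    Pgood L l 0 := by
  obtain ⟨z, hz⟩ := (List.finite_toSet l).infinite_compl.nonempty
  exact ⟨z, hz, by intro j hj; omega⟩

open Classical in
/-- The generating algorithm: output an unseen element of the intersection of the
consistent languages with indices below the greatest feasible `m`. -/
noncomputable def genAlg {U : Type} [Infinite U] (L : ℕ → Set U) (l : List U) : U :=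
  (Nat.findGreatest_spec (P := Pgood L l) (Nat.zero_le l.toFinset.card)
    (Pgood_zero L l)).choose

open Classical in
lemma genAlg_spec {U : Type} [Infinite U] (L : ℕ → Set U) (l : List U) :
    genAlg L l ∉ l ∧
      genAlg L l ∈ Iset L l (Nat.findGreatest (Pgood L l) l.toFinset.card) :=
  (Nat.findGreatest_spec (P := Pgood L l) (Nat.zero_le l.toFinset.card)
    (Pgood_zero L l)).choose_spec

theorem nonuniform_generation_for_countable_collections
    (U : Type) [Countable U] [Infinite U]
    (L : ℕ → Set U) (hL : ∀ i, (L i).Infinite) :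
    ∃ A : List U → U, ∀ i : ℕ, ∃ tstar : ℕ,
      ∀ x : ℕ → U, IsEnumerationOf (L i) x →
        ∀ t : ℕ, tstar ≤ (seen x t).ncard →
          A (inputList x t) ∈ L i \ seen x t := by
  classical
  refine ⟨genAlg L, fun i => ?_⟩
  refine ⟨max (i + 2)
    (1 + ((Finset.range (i + 1)).powerset.sup
      (fun T => (⋂ j ∈ T, L j).ncard))), fun x hx t hcard => ?_⟩
  set l := inputList x t with hl
  -- the seen set equals the set of elements of the list
  have hsetl : {a : U | a ∈ l} = seen x t := by
    ext a
    simp only [hl, inputList, Set.mem_setOf_eq, List.mem_ofFn, seen, Set.mem_image,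
      Set.mem_setOf_eq]
    constructor
    · rintro ⟨k, rfl⟩; exact ⟨k, k.isLt, rfl⟩
    · rintro ⟨k, hk, rfl⟩; exact ⟨⟨k, hk⟩, rfl⟩
  have hcoe : (↑l.toFinset : Set U) = seen x t := by
    rw [← hsetl]; ext a; simp
  have hncard : (seen x t).ncard = l.toFinset.card := by
    rw [← hcoe, Set.ncard_coe_finset]
  have hn : max (i + 2)
      (1 + ((Finset.range (i + 1)).powerset.sup
        (fun T => (⋂ j ∈ T, L j).ncard))) ≤ l.toFinset.card := by
    rw [← hncard]; exact hcard
  have hni : i + 2 ≤ l.toFinset.card := le_trans (le_max_left _ _) hn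
  have hnsup : 1 + ((Finset.range (i + 1)).powerset.sup
      (fun T => (⋂ j ∈ T, L j).ncard)) ≤ l.toFinset.card :=
    le_trans (le_max_right _ _) hn
  -- all elements of the list are in L i
  have hlmem : ∀ a ∈ l, a ∈ L i := by
    intro a ha
    have : a ∈ seen x t := by rw [← hsetl]; exact ha
    obtain ⟨k, _, rfl⟩ := this
    exact hx.1 k
  -- the exact consistent set of indices ≤ i
  set T : Finset ℕ := (Finset.range (i + 1)).filter (fun j => ∀ a ∈ l, a ∈ L j)
    with hT
  have hiT : i ∈ T := by
    simp only [hT, Finset.mem_filter, Finset.mem_range]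
    exact ⟨Nat.lt_succ_self i, hlmem⟩
  have hTpow : T ∈ (Finset.range (i + 1)).powerset := by
    simp only [Finset.mem_powerset, hT]
    exact Finset.filter_subset _ _
  -- the seen set is contained in the intersection over T
  have hSsub : (↑l.toFinset : Set U) ⊆ ⋂ j ∈ T, L j := by
    intro a ha
    simp only [Set.mem_iInter]
    intro j hj
    simp only [hT, Finset.mem_filter] at hj
    exact hj.2 a (by simpa using ha)
  -- the intersection over T is infinite
  have hMinf : (⋂ j ∈ T, L j).Infinite := by
    by_contra hfin
    rw [Set.not_infinite] at hfin
    have h1 : l.toFinset.card ≤ (⋂ j ∈ T, L j).ncard := by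
      rw [← Set.ncard_coe_finset]
      exact Set.ncard_le_ncard hSsub hfin
    have h2 : (⋂ j ∈ T, L j).ncard ≤
        (Finset.range (i + 1)).powerset.sup (fun T => (⋂ j ∈ T, L j).ncard) :=
      Finset.le_sup (f := fun T => (⋂ j ∈ T, L j).ncard) hTpow
    omega
  -- hence there is a fresh element witnessing Pgood at level i+1
  obtain ⟨z, hzM, hzS⟩ :=
    (hMinf.diff (l.toFinset.finite_toSet)).nonempty
  have hPgood : Pgood L l (i + 1) := by
    refine ⟨z, by simpa using hzS, ?_⟩
    intro j hj hcons
    have hjT : j ∈ T := by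
      simp only [hT, Finset.mem_filter, Finset.mem_range]
      exact ⟨hj, hcons⟩
    simp only [Set.mem_iInter] at hzM
    exact hzM j hjT
  have hge : i + 1 ≤ Nat.findGreatest (Pgood L l) l.toFinset.card :=
    Nat.le_findGreatest (by omega) hPgood
  obtain ⟨hnotmem, hmem⟩ := genAlg_spec L l
  constructor
  · exact hmem i (by omega) hlmem
  · rw [← hsetl]; exact hnotmem
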